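/- Let w₁,…,w_N be scalar weights on (x₀,x₁) with monic orthogonal polynomial sequences pⁱ, and let Qₙ and T(x) = I + Ax be constructed as in the setup. Suppose there exist m ≥ 0, polynomials f_{i,j} ∈ ℝ[x] (1 ≤ i ≤ N, 0 ≤ j ≤ m), and real numbers λ_{n,i} such that Σ_{j=0}^{m} (pₙⁱ)^{(j)}(x)·f_{i,j}(x) = λ_{n,i}·pₙⁱ(x) for all n ≥ 0 and all i (each pⁱ is an eigenfunction of the scalar differential operator δᵢ = Σⱼ ∂ʲf_{i,j}). Assume the eigenvalue matching conditions: λ_{n,2i−1} = λ_{n+1,2i} for all n ≥ 0 and 1 ≤ i ≤ ⌊N/2⌋, and λ_{n+1,2i} = λ_{n,2i+1} for all n ≥ 0 and 1 ≤ i ≤ ⌊(N−1)/2⌋. Then for all n ≥ 0 and all x: Σ_{j=0}^{m} (d/dx)ʲ[Qₙ(x)T(x)]·diag(f_{1,j}(x),…,f_{N,j}(x)) = diag(λ_{n,1},…,λ_{n,N})·Qₙ(x)·T(x). Equivalently, Qₙ is an eigenfunction of the matrix differential operator D = T(x)·diag(δ₁,…,δ_N)·T(x)⁻¹ with eigenvalue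 diag(λ_{n,1},…,λ_{n,N}). -/

import Mathlib

open MeasureTheory Matrix Polynomial

noncomputable section

/-- The staircase nilpotent matrix `A = ∑ a_{2j-1} E_{2j-1,2j} + ∑ a_{2j} E_{2j+1,2j}`
(1-based indices, here realized with 0-based `Fin N` indices). -/
def nilA (N : ℕ) (a : ℕ → ℝ) : Matrix (Fin N) (Fin N) ℝ :=
  Matrix.of fun i k =>
    if k.val % 2 = 1 ∧ i.val + 1 = k.val then a k.val
    else if k.val % 2 = 1 ∧ i.val = k.val + 1 then a i.val
    else 0

/-- `Pₙ(x) = diag(pₙ¹(x), …, pₙᴺ(x))`. -/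
def diagP {N : ℕ} (p : Fin N → ℕ → Polynomial ℝ) (n : ℕ) (x : ℝ) :
    Matrix (Fin N) (Fin N) ℝ :=
  Matrix.diagonal fun i => (p i n).eval x

/-- `‖Pₙ‖² = diag(‖pₙ¹‖², …, ‖pₙᴺ‖²)` where `‖pₙⁱ‖² = ∫_S pₙⁱ(x)² wᵢ(x) dx`. -/
def nsq {N : ℕ} (S : Set ℝ) (w : Fin N → ℝ → ℝ) (p : Fin N → ℕ → Polynomial ℝ)
    (n : ℕ) : Matrix (Fin N) (Fin N) ℝ :=
  Matrix.diagonal fun i => ∫ x in S, (p i n).eval x ^ 2 * w i x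

/-- The matrix polynomials
`Qₙ(x) = Pₙ(x) + A Pₙ₊₁(x) − ‖Pₙ‖² Aᵀ ‖Pₙ₋₁‖⁻² Pₙ₋₁(x) − Pₙ(x) A x
        + ‖Pₙ‖² Aᵀ ‖Pₙ₋₁‖⁻² Pₙ₋₁(x) A x`,
with the terms containing `‖P₋₁‖⁻²` set to `0` when `n = 0`. -/
def matQ {N : ℕ} (S : Set ℝ) (w : Fin N → ℝ → ℝ) (p : Fin N → ℕ → Polynomial ℝ)
    (a : ℕ → ℝ) (n : ℕ) (x : ℝ) : Matrix (Fin N) (Fin N) ℝ :=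
  let A := nilA N a
  let C : Matrix (Fin N) (Fin N) ℝ :=
    if n = 0 then 0 else nsq S w p n * Aᵀ * (nsq S w p (n - 1))⁻¹
  diagP p n x + A * diagP p (n + 1) x - C * diagP p (n - 1) x
    - x • (diagP p n x * A) + x • (C * diagP p (n - 1) x * A)

lemma nilA_diag_nilA (N : ℕ) (a : ℕ → ℝ) (d : Fin N → ℝ) :
    nilA N a * (Matrix.diagonal d * nilA N a) = 0 := by
  ext i k
  simp only [Matrix.mul_apply, Matrix.diagonal_apply, ite_mul, zero_mul,
    Finset.sum_ite_eq, Finset.mem_univ, if_true, Matrix.zero_apply]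
  apply Finset.sum_eq_zero
  intro c _
  rcases Nat.even_or_odd c.val with hc | hc
  · rw [Nat.even_iff] at hc
    have h0 : nilA N a i c = 0 := by
      simp only [nilA, Matrix.of_apply]
      split_ifs with h1 h2 <;> [skip; skip; rfl] <;> omega
    rw [h0, zero_mul]
  · rw [Nat.odd_iff] at hc
    have h0 : nilA N a c k = 0 := by
      simp only [nilA, Matrix.of_apply]
      split_ifs with h1 h2 <;> [skip; skip; rfl] <;> omega
    rw [h0, mul_zero, mul_zero]

lemma nilA_sq (N : ℕ) (a : ℕ → ℝ) : nilA N a * nilA N a = 0 := by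
  have := nilA_diag_nilA N a (fun _ => (1:ℝ))
  simpa using this

lemma iteratedDeriv_polyeval (q : Polynomial ℝ) (j : ℕ) :
    iteratedDeriv j (fun y => q.eval y) = fun x => (derivative^[j] q).eval x := by
  induction j with
  | zero => simp [iteratedDeriv_zero]
  | succ j ih =>
    rw [iteratedDeriv_succ, ih, Function.iterate_succ_apply']
    funext x
    exact Polynomial.deriv (𝕜 := ℝ) _


lemma matQ_mul_T {N : ℕ} (S : Set ℝ) (w : Fin N → ℝ → ℝ) (p : Fin N → ℕ → Polynomial ℝ)
    (a : ℕ → ℝ) (n : ℕ) (y : ℝ) :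
    matQ S w p a n y * (1 + y • nilA N a)
      = diagP p n y + nilA N a * diagP p (n + 1) y
        - (if n = 0 then 0 else nsq S w p n * (nilA N a)ᵀ * (nsq S w p (n - 1))⁻¹)
            * diagP p (n - 1) y := by
  have hAA := nilA_sq N a
  have hADA : ∀ (m : ℕ), nilA N a * (diagP p m y * nilA N a) = 0 := fun m =>
    nilA_diag_nilA N a _
  simp only [matQ]
  simp only [mul_add, mul_one, add_mul, sub_mul, Matrix.smul_mul, Matrix.mul_smul,
    Matrix.mul_assoc, hAA, hADA, mul_zero, smul_zero, add_zero, sub_zero]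
  abel


/-- If each scalar sequence `pⁱ` is an eigenfunction of a differential operator
`δᵢ = ∑_{j=0}^{m} ∂ʲ f_{i,j}` with eigenvalues `λ_{n,i}` satisfying the matching
conditions `λ_{n,2i−1} = λ_{n+1,2i}` and `λ_{n+1,2i} = λ_{n,2i+1}` (1-based indices),
then `Qₙ` is an eigenfunction of `D = T(x) diag(δ₁,…,δ_N) T(x)⁻¹`:
`∑_{j=0}^{m} (d/dx)ʲ[Qₙ(x)T(x)] · diag(f_{1,j}(x),…,f_{N,j}(x))
  = diag(λ_{n,1},…,λ_{n,N}) · Qₙ(x) T(x)`. -/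
theorem matQ_bispectral
    (N : ℕ) (x₀ x₁ : ℝ) (w : Fin N → ℝ → ℝ) (p : Fin N → ℕ → Polynomial ℝ)
    (a : ℕ → ℝ)
    (hmeas : ∀ i, Measurable (w i))
    (hpos : ∀ i, ∀ᵐ x ∂volume, x ∈ Set.Ioo x₀ x₁ → 0 < w i x)
    (hsupp : ∀ i, ∀ x ∉ Set.Ioo x₀ x₁, w i x = 0)
    (hmom : ∀ i (n : ℕ), Integrable (fun x => |x| ^ n * w i x))
    (hmonic : ∀ i n, (p i n).Monic)
    (hdeg : ∀ i n, (p i n).natDegree = n)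
    (horth : ∀ i, ∀ n m : ℕ, n ≠ m →
      ∫ x in Set.Ioo x₀ x₁, (p i n).eval x * (p i m).eval x * w i x = 0)
    (hnorm : ∀ i n, 0 < ∫ x in Set.Ioo x₀ x₁, (p i n).eval x ^ 2 * w i x)
    (ha : ∀ k, 1 ≤ k → k ≤ N - 1 → a k ≠ 0)
    (m : ℕ) (f : Fin N → ℕ → Polynomial ℝ) (lam : ℕ → Fin N → ℝ)
    (heig : ∀ i (n : ℕ) (x : ℝ),
      ∑ j ∈ Finset.range (m + 1),
        iteratedDeriv j (fun y => (p i n).eval y) x * (f i j).eval x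
      = lam n i * (p i n).eval x)
    (hmatch₁ : ∀ (n : ℕ) (c : Fin N), c.val % 2 = 1 →
      lam n ⟨c.val - 1, Nat.lt_of_le_of_lt (Nat.sub_le _ _) c.isLt⟩ = lam (n + 1) c)
    (hmatch₂ : ∀ (n : ℕ) (c : Fin N), c.val % 2 = 1 → ∀ h : c.val + 1 < N,
      lam (n + 1) c = lam n ⟨c.val + 1, h⟩) :
    ∀ (n : ℕ) (x : ℝ),
      ∑ j ∈ Finset.range (m + 1),
        (Matrix.of fun i k : Fin N =>
          iteratedDeriv j
            (fun y => (matQ (Set.Ioo x₀ x₁) w p a n y * (1 + y • nilA N a)) i k) x) *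
          Matrix.diagonal (fun k => (f k j).eval x)
      = Matrix.diagonal (fun i => lam n i) *
          (matQ (Set.Ioo x₀ x₁) w p a n x * (1 + x • nilA N a)) := by
  intro n x
  set S := Set.Ioo x₀ x₁ with hS
  have heig' : ∀ (i : Fin N) (ℓ : ℕ),
      ∑ j ∈ Finset.range (m + 1),
        (derivative^[j] (p i ℓ)).eval x * (f i j).eval x = lam ℓ i * (p i ℓ).eval x := by
    intro i ℓ
    have := heig i ℓ x
    simpa only [iteratedDeriv_polyeval] using this
  ext i k
  -- constants
  set Cmat : Matrix (Fin N) (Fin N) ℝ :=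
    if n = 0 then 0 else nsq S w p n * (nilA N a)ᵀ * (nsq S w p (n - 1))⁻¹ with hCmat
  set c1 : ℝ := if i = k then 1 else 0 with hc1
  set c2 : ℝ := nilA N a i k with hc2
  set c3 : ℝ := Cmat i k with hc3
  -- entrywise description of Qₙ(y)T(y)
  have hentry : ∀ y : ℝ, (matQ S w p a n y * (1 + y • nilA N a)) i k
      = c1 * (p k n).eval y + c2 * (p k (n + 1)).eval y - c3 * (p k (n - 1)).eval y := by
    intro y
    rw [matQ_mul_T, ← hCmat]
    simp only [Matrix.sub_apply, Matrix.add_apply, diagP, Matrix.mul_diagonal,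
      Matrix.diagonal_apply, hc1, hc2, hc3]
    by_cases h : i = k
    · subst h; simp
    · simp [h]
  set q : Polynomial ℝ := Polynomial.C c1 * p k n + Polynomial.C c2 * p k (n + 1)
      - Polynomial.C c3 * p k (n - 1) with hq
  have hfun : (fun y => (matQ S w p a n y * (1 + y • nilA N a)) i k)
      = fun y => q.eval y := by
    funext y
    rw [hentry y, hq]
    simp
  have hiter : ∀ j, derivative^[j] q
      = Polynomial.C c1 * derivative^[j] (p k n)
        + Polynomial.C c2 * derivative^[j] (p k (n + 1))
        - Polynomial.C c3 * derivative^[j] (p k (n - 1)) := by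
    intro j
    induction j with
    | zero => simp [hq]
    | succ j ih =>
      rw [Function.iterate_succ_apply', ih]
      simp only [derivative_sub, derivative_add, derivative_C_mul,
        Function.iterate_succ_apply']
  -- eigenvalue matchings
  have h1 : c1 * lam n k = lam n i * c1 := by
    by_cases h : i = k
    · subst h; ring
    · simp [hc1, h]
  have h2 : c2 * lam (n + 1) k = lam n i * c2 := by
    by_cases h : c2 = 0
    · simp [h]
    · have hA := h
      rw [hc2] at hA
      simp only [nilA, Matrix.of_apply] at hA
      split_ifs at hA with hb1 hb2
      · have hik : i = ⟨k.val - 1, Nat.lt_of_le_of_lt (Nat.sub_le _ _) k.isLt⟩ := by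
          apply Fin.ext
          show i.val = k.val - 1
          omega
        have := hmatch₁ n k hb1.1
        rw [← hik] at this
        rw [← this]; ring
      · have hkN : k.val + 1 < N := by omega
        have := hmatch₂ n k hb2.1 hkN
        have hik : i = ⟨k.val + 1, hkN⟩ := by
          apply Fin.ext
          show i.val = k.val + 1
          omega
        rw [← hik] at this
        rw [this]; ring
      · exact absurd rfl hA
  have h3 : c3 * lam (n - 1) k = lam n i * c3 := by
    by_cases h : c3 = 0
    · simp [h]
    · have hn : n ≠ 0 := by
        intro hn0
        apply h
        rw [hc3, hCmat, if_pos hn0]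
        simp
    -- compute the entry
      have hc3' : c3 = (∫ t in S, (p i n).eval t ^ 2 * w i t) * (nilA N a) k i
          * Ring.inverse (fun i => ∫ t in S, (p i (n - 1)).eval t ^ 2 * w i t) k := by
        rw [hc3, hCmat, if_neg hn, nsq, nsq, Matrix.inv_diagonal]
        rw [Matrix.mul_diagonal, Matrix.diagonal_mul, Matrix.transpose_apply]
      have hAki : nilA N a k i ≠ 0 := by
        intro h0
        apply h
        rw [hc3', h0]; ring
      simp only [nilA, Matrix.of_apply] at hAki
      split_ifs at hAki with hb1 hb2
      · -- i odd, k + 1 = i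
        have hik : k = ⟨i.val - 1, Nat.lt_of_le_of_lt (Nat.sub_le _ _) i.isLt⟩ := by
          apply Fin.ext
          show k.val = i.val - 1
          omega
        have := hmatch₁ (n - 1) i hb1.1
        rw [← hik, show n - 1 + 1 = n from by omega] at this
        rw [this]; ring
      · -- i odd, k = i + 1
        have hiN : i.val + 1 < N := by omega
        have := hmatch₂ (n - 1) i hb2.1 hiN
        rw [show n - 1 + 1 = n from by omega] at this
        have hik : k = ⟨i.val + 1, hiN⟩ := by
          apply Fin.ext
          show k.val = i.val + 1
          omega
        rw [← hik] at this
        rw [← this]; ring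
      · exact absurd rfl hAki
  -- now compute both sides
  rw [Matrix.sum_apply]
  simp only [Matrix.mul_diagonal, Matrix.of_apply, Matrix.diagonal_mul, hfun]
  simp only [iteratedDeriv_polyeval, hiter, eval_add, eval_sub, eval_mul, eval_C,
    add_mul, sub_mul, mul_assoc]
  rw [Finset.sum_sub_distrib, Finset.sum_add_distrib, ← Finset.mul_sum, ← Finset.mul_sum,
    ← Finset.mul_sum, heig' k n, heig' k (n + 1), heig' k (n - 1)]
  rw [hentry x]
  linear_combination (p k n).eval x * h1 + (p k (n + 1)).eval x * h2
    - (p k (n - 1)).eval x * h3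


end
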